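/- Holographic principle for error correction: for every positive integer r there exists a constant c > 0 such that the following holds. For every L and every subspace G ≤ V(Q) on the qubit set Q = Fin L × Fin L that is spanned by generators each supported in some square box of size r×r, has at least one logical qubit, and has distance d: every square box M ⊆ Q of size R×R with R ≤ c·d satisfies l(M) = 0, i.e. no dressed logical operator is supported inside M. -/

import Mathlib

set_option linter.unusedSectionVars false

open Finset Matrix

abbrev F2 : Type := ZMod 2

abbrev PauliSpace (Q : Type) := Q → F2 × F2

section Pauli

variable {Q : Type} [Fintype Q] [DecidableEq Q]

/-- Support of a Pauli vector. -/
def psupp (v : PauliSpace Q) : Finset Q := Finset.univ.filter (fun q => v q ≠ (0, 0))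

/-- Weight of a Pauli vector. -/
def pwt (v : PauliSpace Q) : ℕ := (psupp v).card

/-- The symplectic form. -/
def omegaF (u v : PauliSpace Q) : F2 :=
  ∑ q, ((u q).1 * (v q).2 + (u q).2 * (v q).1)

lemma omegaF_add_left (u v w : PauliSpace Q) :
    omegaF (u + v) w = omegaF u w + omegaF v w := by
  simp only [omegaF, Pi.add_apply, Prod.fst_add, Prod.snd_add, ← Finset.sum_add_distrib]
  exact Finset.sum_congr rfl (fun q _ => by ring)

lemma omegaF_smul_left (c : F2) (u w : PauliSpace Q) :
    omegaF (c • u) w = c * omegaF u w := by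
  simp only [omegaF, Pi.smul_apply, Prod.smul_fst, Prod.smul_snd, smul_eq_mul,
    Finset.mul_sum]
  exact Finset.sum_congr rfl (fun q _ => by ring)

/-- Centralizer of a subspace w.r.t. the symplectic form. -/
def pcent (G : Submodule F2 (PauliSpace Q)) : Submodule F2 (PauliSpace Q) where
  carrier := {v | ∀ g ∈ G, omegaF v g = 0}
  zero_mem' := by
    intro g _
    simp [omegaF]
  add_mem' := by
    intro a b ha hb g hg
    rw [omegaF_add_left, ha g hg, hb g hg, add_zero]
  smul_mem' := by
    intro c a ha g hg
    rw [omegaF_smul_left, ha g hg, mul_zero]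

/-- Stabilizer group of a gauge group. -/
def pstab (G : Submodule F2 (PauliSpace Q)) : Submodule F2 (PauliSpace Q) := G ⊓ pcent G

/-- Single-qubit Pauli X vector. -/
def Xop (c : Q) : PauliSpace Q := fun q => if q = c then (1, 0) else (0, 0)

/-- Single-qubit Pauli Z vector. -/
def Zop (c : Q) : PauliSpace Q := fun q => if q = c then (0, 1) else (0, 0)

/-- The set of weights of dressed logical operators; its infimum is the distance. -/
def distSet (G : Submodule F2 (PauliSpace Q)) : Set ℕ :=
  {w | ∃ v, v ∈ pcent (pstab G) ∧ v ∉ G ∧ pwt v = w}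

/-- Pauli vectors supported in `M`. -/
def PMod (M : Finset Q) : Submodule F2 (PauliSpace Q) where
  carrier := {v | ∀ q, q ∉ M → v q = 0}
  zero_mem' := by intro q _; rfl
  add_mem' := by
    intro a b ha hb q hq
    simp [Pi.add_apply, ha q hq, hb q hq]
  smul_mem' := by
    intro c a ha q hq
    simp [Pi.smul_apply, ha q hq]

/-- Projection onto the qubits in `M`. -/
def projL (M : Finset Q) : PauliSpace Q →ₗ[F2] PauliSpace Q where
  toFun v := fun q => if q ∈ M then v q else 0
  map_add' a b := by funext q; by_cases h : q ∈ M <;> simp [h]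
  map_smul' c a := by funext q; by_cases h : q ∈ M <;> simp [h]

/-- Number of independent dressed logical operators supported in `M`. -/
noncomputable def lM (G : Submodule F2 (PauliSpace Q)) (M : Finset Q) : ℕ :=
  Module.finrank F2 ↥(pcent ((pstab G).map (projL M)) ⊓ PMod M)
    - Module.finrank F2 ↥(G ⊓ PMod M)

/-- Number of independent bare logical operators supported in `M`. -/
noncomputable def lbareM (G : Submodule F2 (PauliSpace Q)) (M : Finset Q) : ℕ :=
  Module.finrank F2 ↥(pcent (G.map (projL M)) ⊓ PMod M)
    - Module.finrank F2 ↥(pstab G ⊓ PMod M)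

end Pauli

section Classical

variable {ι : Type} [Fintype ι] [DecidableEq ι]

/-- Hamming weight of a classical vector. -/
def hwt (v : ι → F2) : ℕ := (Finset.univ.filter (fun i => v i ≠ 0)).card

/-- Row space of a matrix. -/
def Crow (A : Matrix ι ι F2) : Submodule F2 (ι → F2) := Submodule.span F2 (Set.range A)

/-- Column space of a matrix. -/
def Ccol (A : Matrix ι ι F2) : Submodule F2 (ι → F2) := Submodule.span F2 (Set.range Aᵀ)

/-- Minimum distance of the row space. -/
noncomputable def drow (A : Matrix ι ι F2) : ℕ := sInf {w | ∃ v ∈ Crow A, v ≠ 0 ∧ hwt v = w}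

/-- Minimum distance of the column space. -/
noncomputable def dcol (A : Matrix ι ι F2) : ℕ := sInf {w | ∃ v ∈ Ccol A, v ≠ 0 ∧ hwt v = w}

/-- Number of nonzero entries of a matrix. -/
def nnz (A : Matrix ι ι F2) : ℕ :=
  (Finset.univ.filter (fun p : ι × ι => A p.1 p.2 ≠ 0)).card

end Classical

section BaconShor

variable {m : ℕ}

/-- Qubit set of the generalized Bacon-Shor code: cells with `A i j = 1`. -/
abbrev QA (A : Matrix (Fin m) (Fin m) F2) : Type := {c : Fin m × Fin m // A c.1 c.2 = 1}

/-- Generators of the gauge group. -/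
def gaugeSet (A : Matrix (Fin m) (Fin m) F2) : Set (PauliSpace (QA A)) :=
  {v | ∃ c c' : QA A, c ≠ c' ∧
    ((c.1.1 = c'.1.1 ∧ v = Xop c + Xop c') ∨ (c.1.2 = c'.1.2 ∧ v = Zop c + Zop c'))}

/-- Gauge group of the generalized Bacon-Shor code. -/
def gaugeBS (A : Matrix (Fin m) (Fin m) F2) : Submodule F2 (PauliSpace (QA A)) :=
  Submodule.span F2 (gaugeSet A)

/-- The row operator `R i`. -/
def Rop (A : Matrix (Fin m) (Fin m) F2) (i : Fin m) : PauliSpace (QA A) :=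
  ∑ c ∈ Finset.univ.filter (fun c : QA A => c.1.1 = i), Zop c

/-- The column operator `C j`. -/
def Cop (A : Matrix (Fin m) (Fin m) F2) (j : Fin m) : PauliSpace (QA A) :=
  ∑ c ∈ Finset.univ.filter (fun c : QA A => c.1.2 = j), Xop c

/-- X-type operator parameterized by a binary vector. -/
def PXop (A : Matrix (Fin m) (Fin m) F2) (x : Fin m → F2) : PauliSpace (QA A) :=
  ∑ j, x j • Cop A j

/-- Z-type operator parameterized by a binary vector. -/
def PZop (A : Matrix (Fin m) (Fin m) F2) (z : Fin m → F2) : PauliSpace (QA A) :=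
  ∑ i, z i • Rop A i

end BaconShor

/-- Binary entropy. -/
noncomputable def H2 (p : ℝ) : ℝ := -p * Real.logb 2 p - (1 - p) * Real.logb 2 (1 - p)
/-- A finite set of lattice sites is contained in some square box of size `r × r`. -/
def InBox {L : ℕ} (r : ℕ) (S : Finset (Fin L × Fin L)) : Prop :=
  ∃ a b : ℕ, ∀ p ∈ S, a ≤ (p.1 : ℕ) ∧ (p.1 : ℕ) < a + r ∧ b ≤ (p.2 : ℕ) ∧ (p.2 : ℕ) < b + r

/-- A subspace has spatially local generators with interaction range `r`: it is spanned
by vectors each supported in some square box of size `r × r`. -/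
def HasLocalGens {L : ℕ} (r : ℕ) (G : Submodule F2 (PauliSpace (Fin L × Fin L))) : Prop :=
  ∃ gens : Set (PauliSpace (Fin L × Fin L)),
    G = Submodule.span F2 gens ∧ ∀ g ∈ gens, InBox r (psupp g)

/-- Cardinality of the boundary `∂M`: the set of sites outside `M` within Chebyshev
distance `r` of some site of `M`. -/
noncomputable def bdryCard {L : ℕ} (r : ℕ) (M : Finset (Fin L × Fin L)) : ℕ :=
  Nat.card {q : Fin L × Fin L // q ∉ M ∧ ∃ p ∈ M,
    Nat.dist (q.1 : ℕ) (p.1 : ℕ) ≤ r ∧ Nat.dist (q.2 : ℕ) (p.2 : ℕ) ≤ r}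
section HoloAux

variable {Q : Type} [Fintype Q] [DecidableEq Q]

lemma omegaF_comm (u v : PauliSpace Q) : omegaF u v = omegaF v u := by
  unfold omegaF
  exact Finset.sum_congr rfl fun q _ => by ring

lemma omegaF_add_right (u v w : PauliSpace Q) :
    omegaF u (v + w) = omegaF u v + omegaF u w := by
  rw [omegaF_comm, omegaF_add_left, omegaF_comm v u, omegaF_comm w u]

lemma omegaF_smul_right (c : F2) (u w : PauliSpace Q) :
    omegaF u (c • w) = c * omegaF u w := by
  rw [omegaF_comm, omegaF_smul_left, omegaF_comm]

/-- The symplectic form as a bilinear form. -/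
def Bform : LinearMap.BilinForm F2 (PauliSpace Q) :=
  LinearMap.mk₂ F2 omegaF omegaF_add_left
    (fun c m n => by rw [omegaF_smul_left, smul_eq_mul])
    omegaF_add_right
    (fun c m n => by rw [omegaF_smul_right, smul_eq_mul])

@[simp] lemma Bform_apply (u v : PauliSpace Q) : Bform u v = omegaF u v := rfl

lemma Bform_isRefl : (Bform (Q := Q)).IsRefl := by
  intro x y h
  rw [Bform_apply, omegaF_comm] at h
  exact h

lemma omegaF_Xop (v : PauliSpace Q) (c : Q) : omegaF v (Xop c) = (v c).2 := by
  unfold omegaF Xop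
  rw [Finset.sum_eq_single c]
  · simp
  · intro q _ hq; simp [hq]
  · simp

lemma omegaF_Zop (v : PauliSpace Q) (c : Q) : omegaF v (Zop c) = (v c).1 := by
  unfold omegaF Zop
  rw [Finset.sum_eq_single c]
  · simp
  · intro q _ hq; simp [hq]
  · simp

lemma Bform_nondeg : (Bform (Q := Q)).Nondegenerate := by
  refine (LinearMap.IsRefl.nondegenerate_iff_separatingLeft Bform_isRefl).mpr ?_
  intro v hv
  funext q
  have h1 := hv (Zop q)
  have h2 := hv (Xop q)
  rw [Bform_apply, omegaF_Zop] at h1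
  rw [Bform_apply, omegaF_Xop] at h2
  show v q = (0 : F2 × F2)
  exact Prod.ext h1 h2

lemma mem_pcent {W : Submodule F2 (PauliSpace Q)} {v : PauliSpace Q} :
    v ∈ pcent W ↔ ∀ g ∈ W, omegaF v g = 0 := Iff.rfl

lemma pcent_eq_orthogonal (W : Submodule F2 (PauliSpace Q)) :
    pcent W = Bform.orthogonal W := by
  ext v
  constructor
  · intro h n hn
    show Bform n v = 0
    rw [Bform_apply, omegaF_comm]
    exact h n hn
  · intro h g hg
    show omegaF v g = 0
    rw [omegaF_comm]
    exact h g hg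

lemma pcent_pcent (W : Submodule F2 (PauliSpace Q)) : pcent (pcent W) = W := by
  rw [pcent_eq_orthogonal, pcent_eq_orthogonal]
  exact LinearMap.BilinForm.orthogonal_orthogonal Bform_nondeg Bform_isRefl W

lemma pcent_antitone {W1 W2 : Submodule F2 (PauliSpace Q)} (h : W1 ≤ W2) :
    pcent W2 ≤ pcent W1 := fun v hv g hg => hv g (h hg)

lemma pcent_sup (W1 W2 : Submodule F2 (PauliSpace Q)) :
    pcent (W1 ⊔ W2) = pcent W1 ⊓ pcent W2 := by
  apply le_antisymm
  · exact le_inf (pcent_antitone le_sup_left) (pcent_antitone le_sup_right)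
  · rintro v ⟨hv1, hv2⟩ g hg
    rcases Submodule.mem_sup.mp hg with ⟨x, hx, y, hy, rfl⟩
    rw [omegaF_add_right, hv1 x hx, hv2 y hy, add_zero]

lemma pcent_inf (W1 W2 : Submodule F2 (PauliSpace Q)) :
    pcent (W1 ⊓ W2) = pcent W1 ⊔ pcent W2 := by
  have h : W1 ⊓ W2 = pcent (pcent W1 ⊔ pcent W2) := by
    rw [pcent_sup, pcent_pcent, pcent_pcent]
  rw [h, pcent_pcent]

lemma mem_PMod {M : Finset Q} {v : PauliSpace Q} :
    v ∈ PMod M ↔ ∀ q ∉ M, v q = 0 := Iff.rfl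

lemma Xop_mem_PMod {M : Finset Q} {c : Q} (hc : c ∈ M) : Xop c ∈ PMod M := by
  intro q hq
  unfold Xop
  have hqc : q ≠ c := by rintro rfl; exact hq hc
  rw [if_neg hqc]
  rfl

lemma Zop_mem_PMod {M : Finset Q} {c : Q} (hc : c ∈ M) : Zop c ∈ PMod M := by
  intro q hq
  unfold Zop
  have hqc : q ≠ c := by rintro rfl; exact hq hc
  rw [if_neg hqc]
  rfl

lemma pcent_PMod (M : Finset Q) : pcent (PMod M) = PMod Mᶜ := by
  ext v
  constructor
  · intro h q hq
    rw [Finset.mem_compl, not_not] at hq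
    have h1 := h (Zop q) (Zop_mem_PMod hq)
    have h2 := h (Xop q) (Xop_mem_PMod hq)
    rw [omegaF_Zop] at h1
    rw [omegaF_Xop] at h2
    exact Prod.ext h1 h2
  · intro h g hg
    unfold omegaF
    apply Finset.sum_eq_zero
    intro q _
    by_cases hq : q ∈ M
    · have : v q = 0 := h q (by simp [hq])
      rw [this]; simp
    · have : g q = 0 := hg q hq
      rw [this]; simp

lemma PMod_compl_inf (M : Finset Q) : PMod Mᶜ ⊓ PMod M = ⊥ := by
  apply (Submodule.eq_bot_iff _).mpr
  rintro v ⟨h1, h2⟩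
  funext q
  by_cases hq : q ∈ M
  · exact h1 q (by simp [hq])
  · exact h2 q hq

lemma projL_apply' (M : Finset Q) (v : PauliSpace Q) (q : Q) :
    projL M v q = if q ∈ M then v q else 0 := rfl

lemma projL_mem_PMod (M : Finset Q) (v : PauliSpace Q) : projL M v ∈ PMod M := by
  intro q hq
  rw [projL_apply', if_neg hq]

lemma omegaF_projL_right {M : Finset Q} {v : PauliSpace Q} (hv : v ∈ PMod M)
    (x : PauliSpace Q) : omegaF v (projL M x) = omegaF v x := by
  unfold omegaF
  apply Finset.sum_congr rfl
  intro q _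
  by_cases hq : q ∈ M
  · rw [projL_apply', if_pos hq]
  · rw [hv q hq]; simp

lemma map_projL_le_PMod (W : Submodule F2 (PauliSpace Q)) (M : Finset Q) :
    W.map (projL M) ≤ PMod M := by
  rintro _ ⟨w, _, rfl⟩
  exact projL_mem_PMod M w

lemma pcent_map_projL (W : Submodule F2 (PauliSpace Q)) (M : Finset Q) :
    pcent (W.map (projL M)) ⊓ PMod M = pcent W ⊓ PMod M := by
  ext v
  simp only [Submodule.mem_inf]
  constructor
  · rintro ⟨h1, h2⟩
    refine ⟨fun g hg => ?_, h2⟩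
    have := h1 (projL M g) (Submodule.mem_map_of_mem hg)
    rwa [omegaF_projL_right h2] at this
  · rintro ⟨h1, h2⟩
    refine ⟨?_, h2⟩
    rintro _ ⟨g, hg, rfl⟩
    rw [omegaF_projL_right h2]
    exact h1 g hg

lemma ddperpA (M : Finset Q) {Y : Submodule F2 (PauliSpace Q)} (hY : Y ≤ PMod M) :
    pcent (pcent Y ⊓ PMod M) ⊓ PMod M = Y := by
  rw [pcent_inf, pcent_pcent, pcent_PMod, sup_inf_assoc_of_le _ hY, PMod_compl_inf,
    sup_bot_eq]

lemma G_le_pcent_pstab (G : Submodule F2 (PauliSpace Q)) : G ≤ pcent (pstab G) := by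
  intro g hg s hs
  rw [omegaF_comm]
  exact hs.2 g hg

lemma pcentG_le_pcent_pstab (G : Submodule F2 (PauliSpace Q)) :
    pcent G ≤ pcent (pstab G) := pcent_antitone inf_le_left

/-- `M` is a correctable region: any dressed logical operator supported in `M` is in `G`. -/
def Corr (G : Submodule F2 (PauliSpace Q)) (M : Finset Q) : Prop :=
  pcent (pstab G) ⊓ PMod M ≤ G

/-- `D` is a lower bound for the weight of dressed logical operators. -/
def GoodD (G : Submodule F2 (PauliSpace Q)) (D : ℕ) : Prop :=
  ∀ v ∈ pcent (pstab G), v ∉ G → D ≤ pwt v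

lemma pwt_le_card {v : PauliSpace Q} {M : Finset Q} (hv : v ∈ PMod M) :
    pwt v ≤ M.card := by
  apply Finset.card_le_card
  intro q hq
  rw [psupp, Finset.mem_filter] at hq
  by_contra h
  exact hq.2 (hv q h)

lemma corr_of_card {G : Submodule F2 (PauliSpace Q)} {D : ℕ} {M : Finset Q}
    (hD : GoodD G D) (h : M.card < D) : Corr G M := by
  rintro v ⟨hv1, hv2⟩
  by_contra hvG
  have h1 := hD v hv1 hvG
  have h2 := pwt_le_card hv2
  omega

lemma bareOK_of_corr {G : Submodule F2 (PauliSpace Q)} {M : Finset Q} (h : Corr G M) :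
    pcent G ⊓ PMod M ≤ pstab G := by
  rintro v ⟨hv1, hv2⟩
  exact ⟨h ⟨pcentG_le_pcent_pstab G hv1, hv2⟩, hv1⟩

lemma cleaning {G : Submodule F2 (PauliSpace Q)} {M : Finset Q}
    (hB : pcent G ⊓ PMod M ≤ pstab G) :
    (pcent (pstab G)).map (projL M) ≤ G.map (projL M) := by
  have key : pcent (G.map (projL M)) ⊓ PMod M ≤
      pcent ((pcent (pstab G)).map (projL M)) ⊓ PMod M := by
    rw [pcent_map_projL, pcent_map_projL, pcent_pcent]
    exact le_inf (le_trans (le_inf hB inf_le_right) inf_le_left) inf_le_right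
  calc (pcent (pstab G)).map (projL M)
      = pcent (pcent ((pcent (pstab G)).map (projL M)) ⊓ PMod M) ⊓ PMod M :=
        (ddperpA M (map_projL_le_PMod _ M)).symm
    _ ≤ pcent (pcent (G.map (projL M)) ⊓ PMod M) ⊓ PMod M :=
        inf_le_inf_right _ (pcent_antitone key)
    _ = G.map (projL M) := ddperpA M (map_projL_le_PMod _ M)

lemma pauli_add_self (x : F2 × F2) : x + x = 0 := by
  revert x; decide

lemma expansion {G : Submodule F2 (PauliSpace Q)} {gens : Set (PauliSpace Q)}
    {A M : Finset Q}
    (hspan : G = Submodule.span F2 gens)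
    (hloc : ∀ g ∈ gens, (∃ q ∈ A, g q ≠ 0) → ∀ q ∉ M, g q = 0)
    (hbare : pcent G ⊓ PMod A ≤ pstab G)
    (hcorrB : Corr G (M \ A)) : Corr G M := by
  rintro v ⟨hvS, hvM⟩
  have h1 : projL A v ∈ G.map (projL A) := cleaning hbare ⟨v, hvS, rfl⟩
  have h3 : G.map (projL A) ≤ (G ⊓ PMod M).map (projL A) := by
    conv_lhs => rw [hspan]
    rw [Submodule.map_span]
    apply Submodule.span_le.mpr
    rintro _ ⟨t, ht, rfl⟩
    by_cases hta : ∃ q ∈ A, t q ≠ 0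
    · apply SetLike.mem_coe.mpr
      apply Submodule.mem_map_of_mem
      refine Submodule.mem_inf.mpr ⟨?_, ?_⟩
      · rw [hspan]; exact Submodule.subset_span ht
      · exact fun q hq => hloc t ht hta q hq
    · push_neg at hta
      have hz : projL A t = 0 := by
        funext q
        rw [projL_apply']
        by_cases hq : q ∈ A
        · rw [if_pos hq]; exact hta q hq
        · rw [if_neg hq]; rfl
      rw [hz]
      exact SetLike.mem_coe.mpr (Submodule.zero_mem _)
  obtain ⟨g, hg, hproj⟩ := h3 h1
  have hgG : g ∈ G := (Submodule.mem_inf.mp hg).1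
  have hgM : g ∈ PMod M := (Submodule.mem_inf.mp hg).2
  have hsum : v + g ∈ pcent (pstab G) ⊓ PMod (M \ A) := by
    refine Submodule.mem_inf.mpr ⟨add_mem hvS (G_le_pcent_pstab G hgG), ?_⟩
    intro q hq
    rw [Finset.mem_sdiff] at hq
    push_neg at hq
    show v q + g q = 0
    by_cases hqM : q ∈ M
    · have hqA : q ∈ A := hq hqM
      have e1 : g q = v q := by
        have := congrFun hproj q
        rwa [projL_apply', projL_apply', if_pos hqA, if_pos hqA] at this
      rw [e1]
      exact pauli_add_self (v q)
    · rw [hvM q hqM, hgM q hqM, add_zero]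
  have hvg : v + g ∈ G := hcorrB hsum
  have hgg : g + g = 0 := by
    funext q
    exact pauli_add_self (g q)
  have : v = (v + g) + g := by rw [add_assoc, hgg, add_zero]
  rw [this]
  exact add_mem hvg hgG

end HoloAux

section HoloGeom

/-- A rectangle of lattice sites. -/
def Rect (L a b w h : ℕ) : Finset (Fin L × Fin L) :=
  Finset.univ.filter fun p =>
    a ≤ (p.1 : ℕ) ∧ (p.1 : ℕ) < a + w ∧ b ≤ (p.2 : ℕ) ∧ (p.2 : ℕ) < b + h

lemma mem_Rect {L a b w h : ℕ} {p : Fin L × Fin L} :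
    p ∈ Rect L a b w h ↔
      a ≤ (p.1 : ℕ) ∧ (p.1 : ℕ) < a + w ∧ b ≤ (p.2 : ℕ) ∧ (p.2 : ℕ) < b + h := by
  simp [Rect]

lemma card_Rect (L a b w h : ℕ) : (Rect L a b w h).card ≤ w * h := by
  have h1 : (Rect L a b w h).card ≤ ((Finset.range w) ×ˢ (Finset.range h)).card := by
    apply Finset.card_le_card_of_injOn (fun p => ((p.1 : ℕ) - a, (p.2 : ℕ) - b))
    · intro p hp
      rw [Finset.mem_coe, mem_Rect] at hp
      simp only [Finset.mem_coe, Finset.mem_product, Finset.mem_range]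
      omega
    · intro p hp p' hp' hpe
      rw [Finset.mem_coe, mem_Rect] at hp hp'
      simp only [Prod.mk.injEq] at hpe
      have e1 : (p.1 : ℕ) = (p'.1 : ℕ) := by omega
      have e2 : (p.2 : ℕ) = (p'.2 : ℕ) := by omega
      exact Prod.ext (Fin.ext e1) (Fin.ext e2)
  simpa [Finset.card_product] using h1

lemma rect_corr {L r : ℕ} (hr : 1 ≤ r) {G : Submodule F2 (PauliSpace (Fin L × Fin L))}
    {gens : Set (PauliSpace (Fin L × Fin L))}
    (hspan : G = Submodule.span F2 gens)
    (hbox : ∀ g ∈ gens, InBox r (psupp g))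
    {D : ℕ} (hD : GoodD G D) (hD1 : 1 ≤ D) :
    ∀ n w h a b : ℕ, w + h ≤ n → 8 * r * w ≤ D → 8 * r * h ≤ D →
      Corr G (Rect L a b w h) := by
  intro n
  induction n with
  | zero =>
    intro w h a b hn hw8 hh8
    have hw : w = 0 := by omega
    subst hw
    apply corr_of_card hD
    have h1 := card_Rect L a b 0 h
    rw [Nat.zero_mul] at h1
    omega
  | succ n IH =>
    intro w h a b hn hw8 hh8
    by_cases hcard : (Rect L a b w h).card < D
    · exact corr_of_card hD hcard
    push_neg at hcard
    have hwh : D ≤ w * h := le_trans hcard (card_Rect L a b w h)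
    -- both sides exceed 2r
    have hside : ∀ u v : ℕ, D ≤ u * v → 8 * r * v ≤ D → 2 * r + 1 ≤ u := by
      intro u v huv hv8
      by_contra hc
      push_neg at hc
      have h1 : u * v ≤ 2 * r * v := Nat.mul_le_mul (show u ≤ 2 * r by omega) (le_refl v)
      have h2 : 8 * (r * v) ≤ 2 * (r * v) := by
        have e1 : 8 * (r * v) = 8 * r * v := by ring
        have e2 : 2 * (r * v) = 2 * r * v := by ring
        rw [e1, e2]
        exact le_trans hv8 (le_trans huv h1)
      obtain ⟨x, hx⟩ : ∃ x, x = r * v := ⟨_, rfl⟩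
      rw [← hx] at h2
      have hx0 : x = 0 := by omega
      have hrv : r * v = 0 := by rw [← hx, hx0]
      rcases Nat.mul_eq_zero.mp hrv with h6 | h6
      · omega
      · subst h6
        rw [Nat.mul_zero] at huv
        omega
    have hw2 : 2 * r + 1 ≤ w := hside w h hwh hh8
    have hh2 : 2 * r + 1 ≤ h := by
      have hwh' : D ≤ h * w := by rw [Nat.mul_comm]; exact hwh
      exact hside h w hwh' hw8
    -- inner rectangle
    have hAcorr : Corr G (Rect L (a + r) (b + r) (w - 2 * r) (h - 2 * r)) := by
      apply IH (w - 2 * r) (h - 2 * r) (a + r) (b + r) (by omega)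
      · exact le_trans (Nat.mul_le_mul le_rfl (by omega)) hw8
      · exact le_trans (Nat.mul_le_mul le_rfl (by omega)) hh8
    -- frame has small cardinality
    have hBcard : (Rect L a b w h \ Rect L (a + r) (b + r) (w - 2 * r) (h - 2 * r)).card < D := by
      have hsub : Rect L a b w h \ Rect L (a + r) (b + r) (w - 2 * r) (h - 2 * r) ⊆
          ((Rect L a b r h ∪ Rect L (a + w - r) b r h) ∪ Rect L a b w r) ∪
            Rect L a (b + h - r) w r := by
        intro p hp
        rw [Finset.mem_sdiff, mem_Rect, mem_Rect] at hp
        simp only [Finset.mem_union, mem_Rect]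
        omega
      have h1 := Finset.card_le_card hsub
      have h2 : (((Rect L a b r h ∪ Rect L (a + w - r) b r h) ∪ Rect L a b w r) ∪
          Rect L a (b + h - r) w r).card ≤ r * h + r * h + w * r + w * r := by
        calc (((Rect L a b r h ∪ Rect L (a + w - r) b r h) ∪ Rect L a b w r) ∪
            Rect L a (b + h - r) w r).card
            ≤ ((Rect L a b r h ∪ Rect L (a + w - r) b r h) ∪ Rect L a b w r).card
              + (Rect L a (b + h - r) w r).card := Finset.card_union_le _ _
          _ ≤ ((Rect L a b r h ∪ Rect L (a + w - r) b r h).card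
              + (Rect L a b w r).card) + (Rect L a (b + h - r) w r).card := by
              exact Nat.add_le_add_right (Finset.card_union_le _ _) _
          _ ≤ (((Rect L a b r h).card + (Rect L (a + w - r) b r h).card)
              + (Rect L a b w r).card) + (Rect L a (b + h - r) w r).card := by
              exact Nat.add_le_add_right (Nat.add_le_add_right (Finset.card_union_le _ _) _) _
          _ ≤ r * h + r * h + w * r + w * r := by
              have c1 := card_Rect L a b r h
              have c2 := card_Rect L (a + w - r) b r h
              have c3 := card_Rect L a b w r
              have c4 := card_Rect L a (b + h - r) w r
              omega
      -- arithmetic: r*h + r*h + w*r + w*r < D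
      have e1 : 8 * r * h = 8 * (r * h) := by ring
      have e2 : 8 * r * w = 8 * (r * w) := by ring
      have e3 : w * r = r * w := Nat.mul_comm _ _
      rw [e1] at hh8
      rw [e2] at hw8
      rw [e3] at h2
      obtain ⟨x, hx⟩ : ∃ x, x = r * h := ⟨_, rfl⟩
      obtain ⟨y, hy⟩ : ∃ y, y = r * w := ⟨_, rfl⟩
      rw [← hx] at hh8 h2
      rw [← hy] at hw8 h2
      omega
    have hBcorr : Corr G (Rect L a b w h \ Rect L (a + r) (b + r) (w - 2 * r) (h - 2 * r)) :=
      corr_of_card hD hBcard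
    -- locality of generators
    have hloc : ∀ g ∈ gens,
        (∃ q ∈ Rect L (a + r) (b + r) (w - 2 * r) (h - 2 * r), g q ≠ 0) →
        ∀ q ∉ Rect L a b w h, g q = 0 := by
      rintro g hg ⟨q0, hq0A, hq0⟩ q hq
      by_contra hgq
      obtain ⟨a', b', hb⟩ := hbox g hg
      have hq0s : q0 ∈ psupp g := by
        rw [psupp, Finset.mem_filter]
        exact ⟨Finset.mem_univ _, hq0⟩
      have hqs : q ∈ psupp g := by
        rw [psupp, Finset.mem_filter]
        exact ⟨Finset.mem_univ _, hgq⟩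
      have h0 := hb q0 hq0s
      have h1 := hb q hqs
      rw [mem_Rect] at hq0A
      apply hq
      rw [mem_Rect]
      omega
    exact expansion hspan hloc (bareOK_of_corr hAcorr) hBcorr

end HoloGeom


/-- Holographic principle for error correction (Lemma 4 of the paper): there is a
constant `c = c(r) > 0` such that no square box of size `R × R` with `R ≤ c·d`
supports a dressed logical operator. -/
theorem holographic_principle (r : ℕ) (hr : 0 < r) :
    ∃ c : ℝ, 0 < c ∧ ∀ L : ℕ, ∀ G : Submodule F2 (PauliSpace (Fin L × Fin L)),
      HasLocalGens r G →
      Module.finrank F2 ↥(pstab G) < Module.finrank F2 ↥(pcent G) →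
      ∀ d : ℕ, d = sInf (distSet G) →
      ∀ R : ℕ, (R : ℝ) ≤ c * d →
      ∀ M : Finset (Fin L × Fin L), InBox R M → lM G M = 0 := by
  refine ⟨1 / (8 * r), by positivity, ?_⟩
  intro L G hloc hrank d hd R hR M hM
  obtain ⟨gens, hspan, hbox⟩ := hloc
  -- the set of dressed logical weights is nonempty, hence d ≥ 1
  have hnt : ∃ v, v ∈ pcent G ∧ v ∉ G := by
    by_contra hc
    push_neg at hc
    have hle : pcent G ≤ G := fun v hv => hc v hv
    have : pstab G = pcent G := le_antisymm inf_le_right (le_inf hle le_rfl)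
    rw [this] at hrank
    exact lt_irrefl _ hrank
  obtain ⟨v0, hv0c, hv0G⟩ := hnt
  have hne : (distSet G).Nonempty :=
    ⟨pwt v0, v0, pcentG_le_pcent_pstab G hv0c, hv0G, rfl⟩
  have hd1 : 1 ≤ d := by
    rw [hd]
    obtain ⟨v1, hv1, hv1G, hwt⟩ := Nat.sInf_mem hne
    rw [← hwt]
    have hv1ne : v1 ≠ 0 := fun h => hv1G (h ▸ G.zero_mem)
    have hex : ∃ q, v1 q ≠ 0 := by
      by_contra hq
      push_neg at hq
      exact hv1ne (funext hq)
    obtain ⟨q, hq⟩ := hex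
    have hqs : q ∈ psupp v1 := by
      rw [psupp, Finset.mem_filter]
      exact ⟨Finset.mem_univ _, hq⟩
    exact Finset.card_pos.mpr ⟨q, hqs⟩
  have hGoodD : GoodD G d := fun v hv hvG => hd ▸ Nat.sInf_le ⟨v, hv, hvG, rfl⟩
  have hR8 : 8 * r * R ≤ d := by
    have h8 : (0 : ℝ) < 8 * (r : ℝ) := by positivity
    have h1 : (R : ℝ) * (8 * (r : ℝ)) ≤ (d : ℝ) := by
      rw [← le_div_iff₀ h8]
      calc (R : ℝ) ≤ 1 / (8 * (r : ℝ)) * d := hR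
        _ = (d : ℝ) / (8 * (r : ℝ)) := by ring
    have h2 : ((8 * r * R : ℕ) : ℝ) ≤ ((d : ℕ) : ℝ) := by
      push_cast
      nlinarith [h1]
    exact_mod_cast h2
  obtain ⟨a, b, hab⟩ := hM
  have hMsub : M ⊆ Rect L a b R R := by
    intro p hp
    rw [mem_Rect]
    exact hab p hp
  have hcorrRect : Corr G (Rect L a b R R) :=
    rect_corr hr hspan hbox hGoodD hd1 (R + R) R R a b le_rfl hR8 hR8
  have hcorrM : Corr G M := by
    rintro v ⟨hv1, hv2⟩
    apply hcorrRect
    refine Submodule.mem_inf.mpr ⟨hv1, ?_⟩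
    intro q hq
    exact hv2 q fun hqM => hq (hMsub hqM)
  have hXY : pcent ((pstab G).map (projL M)) ⊓ PMod M = G ⊓ PMod M := by
    rw [pcent_map_projL]
    apply le_antisymm
    · exact le_inf hcorrM inf_le_right
    · exact le_inf (fun v hv => G_le_pcent_pstab G (Submodule.mem_inf.mp hv).1) inf_le_right
  rw [lM, hXY, Nat.sub_self]
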